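/- For all integers k and ℓ with 1 ≤ ℓ < k, the number of surjective functions from Fin k onto Fin ℓ is at most √k · (k^k · ℓ^(k−ℓ)) / ((k−ℓ)^(k−ℓ) · e^ℓ) (as a real number, where e is Euler's number). -/

import Mathlib

open Finset

lemma key_ineq (m : ℕ) (hm : 1 ≤ m) :
    Real.exp 1 * Real.sqrt m * (m : ℝ) ^ m ≤ Real.sqrt ((m : ℝ) + 1) * ((m : ℝ) + 1) ^ m := by
  have hm0 : (0 : ℝ) < m := by exact_mod_cast hm
  have hm1 : (1 : ℝ) ≤ m := by exact_mod_cast hm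
  set x : ℝ := 2 / (2 * m + 1) with hxdef
  have hx0 : 0 < x := by positivity
  have hx23 : x ≤ 2 / 3 := by
    rw [hxdef, div_le_div_iff₀ (by positivity) (by norm_num)]
    linarith
  have h2mx : 2 * (m : ℝ) * x = 2 - x := by
    rw [hxdef]; field_simp; ring
  have h2 : Real.exp x ≤ 1 + x + x ^ 2 / 2 + (2 / 9) * x ^ 3 := by
    have h := Real.exp_bound' hx0.le (by linarith) (n := 3) (by norm_num)
    have hsum : (∑ i ∈ Finset.range 3, x ^ i / (i.factorial : ℝ)) = 1 + x + x ^ 2 / 2 := by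
      norm_num [Finset.sum_range_succ]
    rw [hsum] at h
    refine h.trans (le_of_eq ?_)
    norm_num [Nat.factorial]
    ring
  have hkey : (1 + x + x ^ 2 / 2 + (2 / 9) * x ^ 3) * (2 - x) ≤ 2 + x := by
    nlinarith [pow_nonneg hx0.le 3, pow_nonneg hx0.le 4]
  have hexp : Real.exp x ≤ ((m : ℝ) + 1) / m := by
    rw [le_div_iff₀ hm0]
    have hPm : (1 + x + x ^ 2 / 2 + (2 / 9) * x ^ 3) * m ≤ (m : ℝ) + 1 := by
      have h2x0 : (0:ℝ) < 2 * x := by linarith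
      rw [← mul_le_mul_iff_of_pos_right h2x0]
      nlinarith [hkey, h2mx]
    calc Real.exp x * m ≤ (1 + x + x ^ 2 / 2 + (2 / 9) * x ^ 3) * m :=
          mul_le_mul_of_nonneg_right h2 hm0.le
      _ ≤ (m : ℝ) + 1 := hPm
  have h1 : Real.exp 1 ≤ (((m : ℝ) + 1) / m) ^ ((m : ℝ) + 1 / 2) := by
    have he : Real.exp 1 = Real.exp x ^ ((m : ℝ) + 1 / 2) := by
      rw [← Real.exp_mul]
      congr 1
      rw [hxdef]
      field_simp
    rw [he]
    exact Real.rpow_le_rpow (Real.exp_pos x).le hexp (by positivity)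
  have hsplit : (((m : ℝ) + 1) / m) ^ ((m : ℝ) + 1 / 2)
      = (((m : ℝ) + 1) ^ m / (m : ℝ) ^ m) * (Real.sqrt ((m : ℝ) + 1) / Real.sqrt m) := by
    rw [Real.rpow_add (by positivity), Real.rpow_natCast, div_pow,
      ← Real.sqrt_eq_rpow, Real.sqrt_div (by positivity) (m : ℝ)]
  rw [hsplit] at h1
  have h2' := mul_le_mul_of_nonneg_right h1
    (show (0:ℝ) ≤ (m:ℝ)^m * Real.sqrt m by positivity)
  have hsm : (0:ℝ) < Real.sqrt m := Real.sqrt_pos.2 hm0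
  have hpm : (0:ℝ) < (m:ℝ)^m := by positivity
  have heq : ((m : ℝ) + 1) ^ m / (m : ℝ) ^ m * (Real.sqrt ((m : ℝ) + 1) / Real.sqrt m)
      * ((m:ℝ)^m * Real.sqrt m) = Real.sqrt ((m : ℝ) + 1) * ((m : ℝ) + 1) ^ m := by
    field_simp
  calc Real.exp 1 * Real.sqrt m * (m : ℝ) ^ m
      = Real.exp 1 * ((m:ℝ)^m * Real.sqrt m) := by ring
    _ ≤ _ := h2'.trans_eq heq

lemma card_surj_le (k ℓ : ℕ) (hℓk : ℓ ≤ k) :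
    Fintype.card {g : Fin k → Fin ℓ // Function.Surjective g} ≤
      k.descFactorial ℓ * ℓ ^ (k - ℓ) := by
  classical
  -- the injection
  have hcount : Fintype.card ((Fin ℓ ↪ Fin k) × (Fin (k - ℓ) → Fin ℓ))
      = k.descFactorial ℓ * ℓ ^ (k - ℓ) := by
    simp [Fintype.card_embedding_eq]
  rw [← hcount]
  -- build the injection
  have hemb : ∀ (g : Fin k → Fin ℓ), Function.Surjective g →
      ∃ f : Fin ℓ ↪ Fin k, ∀ j, g (f j) = j := by
    intro g hg
    have hne : ∀ j : Fin ℓ, (Finset.univ.filter fun x => g x = j).Nonempty := by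
      intro j
      obtain ⟨x, hx⟩ := hg j
      exact ⟨x, by simp [hx]⟩
    refine ⟨⟨fun j => (Finset.univ.filter fun x => g x = j).min' (hne j), ?_⟩, ?_⟩
    · intro j₁ j₂ hj
      have h1 : g ((Finset.univ.filter fun x => g x = j₁).min' (hne j₁)) = j₁ := by
        have := (Finset.univ.filter fun x => g x = j₁).min'_mem (hne j₁)
        simpa using this
      have h2 : g ((Finset.univ.filter fun x => g x = j₂).min' (hne j₂)) = j₂ := by
        have := (Finset.univ.filter fun x => g x = j₂).min'_mem (hne j₂)
        simpa using this
      rw [← h1, ← h2]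
      exact congrArg g hj
    · intro j
      have := (Finset.univ.filter fun x => g x = j).min'_mem (hne j)
      show g ((Finset.univ.filter fun x => g x = j).min' (hne j)) = j
      simpa using this
  choose f hf using hemb
  have hcard : ∀ (g : Fin k → Fin ℓ) (hg : Function.Surjective g),
      ((Finset.image (f g hg) Finset.univ)ᶜ : Finset (Fin k)).card = k - ℓ := by
    intro g hg
    rw [Finset.card_compl, Finset.card_image_of_injective _ (f g hg).injective]
    simp
  set Φ : {g : Fin k → Fin ℓ // Function.Surjective g} →
      (Fin ℓ ↪ Fin k) × (Fin (k - ℓ) → Fin ℓ) := fun gg =>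
    (f gg.1 gg.2, fun i => gg.1
      (((Finset.image (f gg.1 gg.2) Finset.univ)ᶜ).orderEmbOfFin (hcard gg.1 gg.2) i)) with hΦ
  apply Fintype.card_le_of_injective Φ
  -- injectivity
  have hcongr : ∀ (s t : Finset (Fin k)) (hs : s.card = k - ℓ) (ht : t.card = k - ℓ),
      s = t → s.orderEmbOfFin hs = t.orderEmbOfFin ht := by
    rintro s t hs ht rfl; rfl
  rintro ⟨g₁, h₁⟩ ⟨g₂, h₂⟩ hΦeq
  have hfst : f g₁ h₁ = f g₂ h₂ := congrArg Prod.fst hΦeq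
  have hsnd := congrArg Prod.snd hΦeq
  simp only [hΦ] at hsnd
  have hsets : (Finset.image (f g₁ h₁) Finset.univ)ᶜ = (Finset.image (f g₂ h₂) Finset.univ)ᶜ := by
    rw [hfst]
  have hembs := hcongr _ _ (hcard g₁ h₁) (hcard g₂ h₂) hsets
  apply Subtype.ext
  funext x
  show g₁ x = g₂ x
  by_cases hx : x ∈ Finset.image (f g₁ h₁) Finset.univ
  · obtain ⟨j, _, hj⟩ := Finset.mem_image.1 hx
    have e1 : g₁ x = j := by rw [← hj]; exact hf g₁ h₁ j
    have e2 : g₂ x = j := by rw [← hj, hfst]; exact hf g₂ h₂ j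
    rw [e1, e2]
  · have hx' : x ∈ (Finset.image (f g₁ h₁) Finset.univ)ᶜ := Finset.mem_compl.2 hx
    have hrange : x ∈ Set.range (((Finset.image (f g₁ h₁) Finset.univ)ᶜ).orderEmbOfFin
        (hcard g₁ h₁)) := by
      rw [Finset.range_orderEmbOfFin]
      exact hx'
    obtain ⟨i, hi⟩ := hrange
    have e0 := congrFun hsnd i
    calc g₁ x = g₁ (((Finset.image (f g₁ h₁) Finset.univ)ᶜ).orderEmbOfFin (hcard g₁ h₁) i) := by
          rw [hi]
      _ = g₂ (((Finset.image (f g₂ h₂) Finset.univ)ᶜ).orderEmbOfFin (hcard g₂ h₂) i) := e0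
      _ = g₂ x := by rw [← hembs, hi]
lemma fact_bound (n : ℕ) (hn : 1 ≤ n) :
    ∀ m, n ≤ m → (m.factorial : ℝ) * (n : ℝ) ^ n * Real.exp 1 ^ m ≤
      (n.factorial : ℝ) * Real.sqrt m * (m : ℝ) ^ m * Real.exp 1 ^ n := by
  intro m
  induction m with
  | zero => intro h; omega
  | succ m ih =>
    intro h
    rcases Nat.lt_or_ge n (m + 1) with hlt | hge
    · -- n ≤ m, use induction hypothesis and key_ineq
      have hnm : n ≤ m := by omega
      have hm1 : 1 ≤ m := le_trans hn hnm
      have ih' := ih hnm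
      have key := key_ineq m hm1
      have e0 : (0:ℝ) < Real.exp 1 := Real.exp_pos 1
      have hcast : ((m + 1 : ℕ) : ℝ) = (m : ℝ) + 1 := by push_cast; ring
      calc ((m + 1).factorial : ℝ) * (n : ℝ) ^ n * Real.exp 1 ^ (m + 1)
          = ((m.factorial : ℝ) * (n : ℝ) ^ n * Real.exp 1 ^ m) * (((m:ℝ)+1) * Real.exp 1) := by
            push_cast [Nat.factorial_succ]
            ring
        _ ≤ ((n.factorial : ℝ) * Real.sqrt m * (m : ℝ) ^ m * Real.exp 1 ^ n) * (((m:ℝ)+1) * Real.exp 1) := by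
            apply mul_le_mul_of_nonneg_right ih'
            positivity
        _ = ((n.factorial : ℝ) * Real.exp 1 ^ n * ((m:ℝ)+1)) * (Real.exp 1 * Real.sqrt m * (m:ℝ)^m) := by
            ring
        _ ≤ ((n.factorial : ℝ) * Real.exp 1 ^ n * ((m:ℝ)+1)) * (Real.sqrt ((m:ℝ)+1) * ((m:ℝ)+1)^m) := by
            apply mul_le_mul_of_nonneg_left key
            positivity
        _ = (n.factorial : ℝ) * Real.sqrt ((m:ℝ)+1) * ((m:ℝ)+1) ^ (m+1) * Real.exp 1 ^ n := by
            rw [pow_succ]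
            ring
        _ = (n.factorial : ℝ) * Real.sqrt ((m+1 : ℕ)) * (((m+1:ℕ)) : ℝ) ^ (m+1) * Real.exp 1 ^ n := by
            rw [hcast]
    · -- n = m + 1 : base case
      have heq : n = m + 1 := by omega
      subst heq
      have h1 : (1:ℝ) ≤ Real.sqrt ((m + 1 : ℕ) : ℝ) := Real.one_le_sqrt.2 (by exact_mod_cast hn)
      have hpos : (0:ℝ) ≤ ((m+1).factorial : ℝ) * ((m + 1 : ℕ) : ℝ) ^ (m+1) * Real.exp 1 ^ (m+1) := by positivity
      nlinarith [mul_nonneg hpos (sub_nonneg.2 h1)]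

/-- For all integers k and ℓ with 1 ≤ ℓ < k, the number of surjective
functions from `Fin k` onto `Fin ℓ` is at most
√k · (k^k · ℓ^(k−ℓ)) / ((k−ℓ)^(k−ℓ) · e^ℓ). -/
theorem num_surjections_le_stirling (k ℓ : ℕ) (hℓ : 1 ≤ ℓ) (hℓk : ℓ < k) :
    (Fintype.card {g : Fin k → Fin ℓ // Function.Surjective g} : ℝ) ≤
      Real.sqrt k * ((k : ℝ) ^ k * (ℓ : ℝ) ^ (k - ℓ)) /
        (((k : ℝ) - (ℓ : ℝ)) ^ (k - ℓ) * Real.exp 1 ^ ℓ) := by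
  have hn1 : 1 ≤ k - ℓ := by omega
  have hnk : k - ℓ ≤ k := Nat.sub_le k ℓ
  have hcastsub : (k : ℝ) - (ℓ : ℝ) = ((k - ℓ : ℕ) : ℝ) := by
    rw [Nat.cast_sub hℓk.le]
  have hn0 : (0:ℝ) < ((k - ℓ : ℕ) : ℝ) := by exact_mod_cast hn1
  rw [hcastsub, div_eq_mul_inv, ← div_eq_mul_inv, le_div_iff₀ (by positivity)]
  -- key real bound on the descending factorial
  have hB := fact_bound (k - ℓ) hn1 k hnk
  have hfd : ((k - ℓ).factorial : ℝ) * (k.descFactorial ℓ : ℝ) = (k.factorial : ℝ) := by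
    exact_mod_cast congrArg (Nat.cast (R := ℝ)) (Nat.factorial_mul_descFactorial hℓk.le)
  have hek : Real.exp 1 ^ k = Real.exp 1 ^ (k - ℓ) * Real.exp 1 ^ ℓ := by
    rw [← pow_add]
    congr 1
    omega
  have hD : (k.descFactorial ℓ : ℝ) * (((k - ℓ : ℕ) : ℝ) ^ (k - ℓ) * Real.exp 1 ^ ℓ) ≤
      Real.sqrt k * (k : ℝ) ^ k := by
    have hpos : (0:ℝ) < ((k - ℓ).factorial : ℝ) * Real.exp 1 ^ (k - ℓ) := by positivity
    apply le_of_mul_le_mul_left _ hpos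
    calc ((k - ℓ).factorial : ℝ) * Real.exp 1 ^ (k - ℓ) *
          ((k.descFactorial ℓ : ℝ) * (((k - ℓ : ℕ) : ℝ) ^ (k - ℓ) * Real.exp 1 ^ ℓ))
        = (((k - ℓ).factorial : ℝ) * (k.descFactorial ℓ : ℝ)) * ((k - ℓ : ℕ) : ℝ) ^ (k - ℓ) *
            (Real.exp 1 ^ (k - ℓ) * Real.exp 1 ^ ℓ) := by ring
      _ = (k.factorial : ℝ) * ((k - ℓ : ℕ) : ℝ) ^ (k - ℓ) * Real.exp 1 ^ k := by
          rw [hfd, ← hek]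
      _ ≤ ((k - ℓ).factorial : ℝ) * Real.sqrt k * (k : ℝ) ^ k * Real.exp 1 ^ (k - ℓ) := hB
      _ = ((k - ℓ).factorial : ℝ) * Real.exp 1 ^ (k - ℓ) * (Real.sqrt k * (k : ℝ) ^ k) := by
          ring
  have hA : (Fintype.card {g : Fin k → Fin ℓ // Function.Surjective g} : ℝ) ≤
      (k.descFactorial ℓ : ℝ) * (ℓ : ℝ) ^ (k - ℓ) := by
    exact_mod_cast card_surj_le k ℓ hℓk.le
  calc (Fintype.card {g : Fin k → Fin ℓ // Function.Surjective g} : ℝ) *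
        (((k - ℓ : ℕ) : ℝ) ^ (k - ℓ) * Real.exp 1 ^ ℓ)
      ≤ ((k.descFactorial ℓ : ℝ) * (ℓ : ℝ) ^ (k - ℓ)) *
        (((k - ℓ : ℕ) : ℝ) ^ (k - ℓ) * Real.exp 1 ^ ℓ) := by
        apply mul_le_mul_of_nonneg_right hA (by positivity)
    _ = ((k.descFactorial ℓ : ℝ) * (((k - ℓ : ℕ) : ℝ) ^ (k - ℓ) * Real.exp 1 ^ ℓ)) *
        (ℓ : ℝ) ^ (k - ℓ) := by ring
    _ ≤ (Real.sqrt k * (k : ℝ) ^ k) * (ℓ : ℝ) ^ (k - ℓ) := by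
        apply mul_le_mul_of_nonneg_right hD (by positivity)
    _ = Real.sqrt k * ((k : ℝ) ^ k * (ℓ : ℝ) ^ (k - ℓ)) := by ring
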